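/- Let G = ⋃_n K(n) be an inductively compact group acting measurably on a standard Borel space X, ρ a positive jointly measurable cocycle. If a probability measure ν with Radon–Nikodym cocycle ρ is ergodic (every G-invariant Borel set has ν-measure 0 or 1), then ν is indecomposable in 𝔐(𝔗,ρ): ν = αν₁ + (1-α)ν₂ with α ∈ (0,1) and ν₁,ν₂ ∈ 𝔐(𝔗,ρ) implies ν₁ = ν₂ = ν. -/

import Mathlib

open MeasureTheory Set
open scoped ENNReal NNReal symmDiff

/-- Auxiliary: for an inductively compact group with left-invariant probability measures on the
pieces, every set that is almost invariant under every group element agrees a.e. with an exactly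
invariant Borel set. -/
lemma aux_transfer14 {G X : Type*} [Group G] [MeasurableSpace G] [MeasurableInv G]
    [MeasurableSpace X]
    (K : ℕ → Subgroup G) (hKmono : Monotone K)
    (hKunion : (⋃ n, (K n : Set G)) = Set.univ)
    (μ : ℕ → Measure G) (hμprob : ∀ n, IsProbabilityMeasure (μ n))
    (hμinv : ∀ n, ∀ g ∈ K n, (μ n).map (fun k => g * k) = μ n)
    (hμmul : ∀ g : G, Measurable fun k : G => g * k)
    (T : G → X → X) (hTmeas : Measurable fun p : G × X => T p.1 p.2)
    (hTmul : ∀ g h x, T (g * h) x = T g (T h x))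
    (ν : Measure X) (hν : IsProbabilityMeasure ν)
    (A : Set X) (hA : MeasurableSet A)
    (hae : ∀ g : G, ∀ᵐ x ∂ν, (T g x ∈ A ↔ x ∈ A)) :
    ∃ B : Set X, MeasurableSet B ∧ (∀ g : G, T g ⁻¹' B = B) ∧ ν B = ν A := by
  haveI := hν
  -- the "inverse-twisted" action set
  set S : Set (G × X) := (fun p : G × X => T p.1⁻¹ p.2) ⁻¹' A with hS
  have hSmeas : MeasurableSet S := by
    have : Measurable fun p : G × X => T p.1⁻¹ p.2 :=
      hTmeas.comp ((measurable_fst.inv).prodMk measurable_snd)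
    exact this hA
  set h : ℕ → X → ℝ≥0∞ := fun n x => μ n ((fun k => (k, x)) ⁻¹' S) with hh
  have hhmeas : ∀ n, Measurable (h n) := by
    intro n
    haveI := hμprob n
    exact measurable_measure_prodMk_right hSmeas
  have hsec : ∀ x : X, MeasurableSet ((fun k : G => (k, x)) ⁻¹' S) :=
    fun x => measurable_prodMk_right hSmeas
  refine ⟨{x | ∀ᶠ n in Filter.atTop, h n x = 1}, ?_, ?_, ?_⟩
  · -- measurability
    have hBeq : {x | ∀ᶠ n in Filter.atTop, h n x = 1}
        = ⋃ N, ⋂ n, {x | N ≤ n → h n x = 1} := by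
      ext x
      simp [Filter.eventually_atTop]
    rw [hBeq]
    refine MeasurableSet.iUnion fun N => MeasurableSet.iInter fun n => ?_
    by_cases hn : N ≤ n
    · simp only [hn, true_implies]
      exact (hhmeas n) (measurableSet_singleton 1)
    · simp only [hn, false_implies, Set.setOf_true]
      exact MeasurableSet.univ
  · -- exact invariance
    intro g
    obtain ⟨m, hm⟩ := Set.mem_iUnion.mp (Set.eq_univ_iff_forall.mp hKunion g)
    ext x
    simp only [Set.mem_preimage, Set.mem_setOf_eq]
    have hstep : ∀ n, m ≤ n → h n (T g x) = h n x := by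
      intro n hn
      have hgn : g⁻¹ ∈ K n := (K n).inv_mem (hKmono hn hm)
      have hpre : (fun k : G => (k, T g x)) ⁻¹' S
          = (fun k : G => g⁻¹ * k) ⁻¹' ((fun k : G => (k, x)) ⁻¹' S) := by
        ext k
        simp only [Set.mem_preimage, hS]
        rw [show (g⁻¹ * k)⁻¹ = k⁻¹ * g by group, hTmul]
      haveI := hμprob n
      calc h n (T g x) = μ n ((fun k : G => g⁻¹ * k) ⁻¹' ((fun k : G => (k, x)) ⁻¹' S)) := by
            show (μ n) ((fun k : G => (k, T g x)) ⁻¹' S) = _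
            rw [hpre]
        _ = ((μ n).map (fun k : G => g⁻¹ * k)) ((fun k : G => (k, x)) ⁻¹' S) := by
            rw [Measure.map_apply (hμmul g⁻¹) (hsec x)]
        _ = h n x := by rw [hμinv n g⁻¹ hgn]
    exact Filter.eventually_congr ((Filter.eventually_ge_atTop m).mono
      fun n hn => by rw [hstep n hn])
  · -- same measure as A
    have hDn : ∀ n, ∀ᵐ x ∂ν, h n x = A.indicator (fun _ => (1 : ℝ≥0∞)) x := by
      intro n
      haveI := hμprob n
      set P : Set (G × X) := Prod.snd ⁻¹' A with hP
      have hPm : MeasurableSet P := measurable_snd hA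
      set D : Set (G × X) := (S \ P) ∪ (P \ S) with hD
      have hDm : MeasurableSet D := (hSmeas.diff hPm).union (hPm.diff hSmeas)
      have hDzero : ((μ n).prod ν) D = 0 := by
        rw [Measure.prod_apply hDm]
        have hk0 : ∀ k : G, ν (Prod.mk k ⁻¹' D) = 0 := by
          intro k
          rw [measure_eq_zero_iff_ae_notMem]
          refine (hae k⁻¹).mono fun x hx => ?_
          simp only [hD, hS, hP, Set.mem_preimage, Set.mem_union, Set.mem_diff,
            Set.mem_setOf_eq, inv_inv] at hx ⊢
          tauto
        simp only [hk0]
        simp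
      have hsym : ∫⁻ x, μ n ((fun k : G => (k, x)) ⁻¹' D) ∂ν = 0 := by
        rw [← Measure.prod_apply_symm hDm, hDzero]
      have hnull : ∀ᵐ x ∂ν, μ n ((fun k : G => (k, x)) ⁻¹' D) = 0 := by
        have hm := measurable_measure_prodMk_right (μ := μ n) hDm
        rw [lintegral_eq_zero_iff hm] at hsym
        exact hsym
      refine hnull.mono fun x hx => ?_
      have hsecD : MeasurableSet ((fun k : G => (k, x)) ⁻¹' D) :=
        measurable_prodMk_right hDm
      by_cases hxA : x ∈ A
      · have hsub : ((fun k : G => (k, x)) ⁻¹' D)ᶜ ⊆ (fun k : G => (k, x)) ⁻¹' S := by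
          intro k hk
          simp only [hD, hP, Set.mem_compl_iff, Set.mem_preimage, Set.mem_union,
            Set.mem_diff] at hk
          by_contra hkS
          exact hk (Or.inr ⟨hxA, hkS⟩)
        have h1 : (1 : ℝ≥0∞) ≤ h n x := by
          have hmono := measure_mono (μ := μ n) hsub
          have hco : μ n (((fun k : G => (k, x)) ⁻¹' D)ᶜ) = 1 := by
            rw [measure_compl hsecD (measure_ne_top _ _), hx, measure_univ, tsub_zero]
          rw [hco] at hmono
          exact hmono
        have h2 : h n x ≤ 1 := by
          show μ n ((fun k : G => (k, x)) ⁻¹' S) ≤ 1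
          exact prob_le_one
        rw [Set.indicator_of_mem hxA]
        exact le_antisymm h2 h1
      · have hsub : (fun k : G => (k, x)) ⁻¹' S ⊆ (fun k : G => (k, x)) ⁻¹' D := by
          intro k hk
          simp only [Set.mem_preimage] at hk
          simp only [hD, hP, Set.mem_preimage, Set.mem_union, Set.mem_diff]
          exact Or.inl ⟨hk, hxA⟩
        rw [Set.indicator_of_notMem hxA]
        exact measure_mono_null hsub hx
    have hall : ∀ᵐ x ∂ν, ∀ n, h n x = A.indicator (fun _ => (1 : ℝ≥0∞)) x :=
      ae_all_iff.mpr hDn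
    apply measure_congr
    rw [Filter.eventuallyEq_set]
    refine hall.mono fun x hx => ?_
    by_cases hxA : x ∈ A
    · simp only [Set.mem_setOf_eq, hxA, iff_true]
      exact Filter.Eventually.of_forall fun n => by
        rw [hx n, Set.indicator_of_mem hxA]
    · simp only [Set.mem_setOf_eq, hxA, iff_false]
      intro hev
      obtain ⟨n, hn⟩ := hev.exists
      rw [hx n, Set.indicator_of_notMem hxA] at hn
      exact zero_ne_one hn

/-- For an action of an inductively compact group, every ergodic probability measure with
Radon–Nikodym cocycle ρ is indecomposable in 𝔐(𝔗,ρ). -/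
theorem stmt14 {G X : Type*} [Group G] [TopologicalSpace G] [IsTopologicalGroup G]
    [MeasurableSpace G] [BorelSpace G]
    [MeasurableSpace X] [StandardBorelSpace X]
    (K : ℕ → Subgroup G) (hKmono : Monotone K)
    (hKcompact : ∀ n, IsCompact (K n : Set G))
    (hKmetr : ∀ n, TopologicalSpace.MetrizableSpace (K n))
    (hKunion : (⋃ n, (K n : Set G)) = Set.univ)
    (μ : ℕ → Measure G) (hμprob : ∀ n, IsProbabilityMeasure (μ n))
    (hμsupp : ∀ n, μ n (K n : Set G) = 1)
    (hμinv : ∀ n, ∀ g ∈ K n, (μ n).map (fun k => g * k) = μ n)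
    (T : G → X → X) (hTmeas : Measurable fun p : G × X => T p.1 p.2)
    (hT1 : ∀ x, T 1 x = x) (hTmul : ∀ g h x, T (g * h) x = T g (T h x))
    (ρ : G → X → ℝ) (hρmeas : Measurable fun p : G × X => ρ p.1 p.2)
    (hρpos : ∀ g x, 0 < ρ g x)
    (hρcoc : ∀ g h x, ρ (g * h) x = ρ g (T h x) * ρ h x)
    (ν : Measure X) [IsProbabilityMeasure ν]
    (hRN : ∀ g, ∀ A : Set X, MeasurableSet A →
      ν (T g '' A) = ∫⁻ x in A, ENNReal.ofReal (ρ g x) ∂ν)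
    (herg : ∀ A : Set X, MeasurableSet A → (∀ g : G, T g '' A = A) →
      ν A = 0 ∨ ν A = 1) :
    ∀ (α : ℝ), α ∈ Set.Ioo (0 : ℝ) 1 → ∀ ν₁ ν₂ : Measure X,
      IsProbabilityMeasure ν₁ → IsProbabilityMeasure ν₂ →
      (∀ g, ∀ A : Set X, MeasurableSet A →
        ν₁ (T g '' A) = ∫⁻ x in A, ENNReal.ofReal (ρ g x) ∂ν₁) →
      (∀ g, ∀ A : Set X, MeasurableSet A →
        ν₂ (T g '' A) = ∫⁻ x in A, ENNReal.ofReal (ρ g x) ∂ν₂) →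
      ν = ENNReal.ofReal α • ν₁ + ENNReal.ofReal (1 - α) • ν₂ →
      ν₁ = ν ∧ ν₂ = ν := by
  intro α hα ν₁ ν₂ hp1 hp2 hRN1 hRN2 hdec
  haveI := hp1; haveI := hp2
  obtain ⟨hα0, hα1⟩ := hα
  -- basic measurability facts about the action
  have hTg : ∀ g : G, Measurable (T g) := fun g =>
    hTmeas.comp (measurable_const.prodMk measurable_id)
  have hTinv : ∀ g : G, ∀ x : X, T g⁻¹ (T g x) = x := by
    intro g x; rw [← hTmul, inv_mul_cancel, hT1]
  have hTinv' : ∀ g : G, ∀ x : X, T g (T g⁻¹ x) = x := by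
    intro g x; rw [← hTmul, mul_inv_cancel, hT1]
  have himg : ∀ g : G, ∀ B : Set X, T g '' B = T g⁻¹ ⁻¹' B := by
    intro g B
    ext y
    constructor
    · rintro ⟨x, hx, rfl⟩
      simpa [Set.mem_preimage, hTinv g x] using hx
    · intro hy
      exact ⟨T g⁻¹ y, hy, hTinv' g y⟩
  -- absolute continuity and the density
  have hαne : ENNReal.ofReal α ≠ 0 := by
    simp [ENNReal.ofReal_eq_zero, not_le, hα0]
  have hac : ν₁ ≪ ν := by
    intro s hs
    have : ν s = ENNReal.ofReal α * ν₁ s + ENNReal.ofReal (1 - α) * ν₂ s := by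
      rw [hdec]; simp [Measure.add_apply, Measure.smul_apply, smul_eq_mul]
    rw [hs] at this
    have h0 : ENNReal.ofReal α * ν₁ s = 0 := by
      have := add_eq_zero.mp this.symm
      exact this.1
    rcases mul_eq_zero.mp h0 with h | h
    · exact absurd h hαne
    · exact h
  set f : X → ℝ≥0∞ := ν₁.rnDeriv ν with hf
  have hfmeas : Measurable f := Measure.measurable_rnDeriv ν₁ ν
  have hwd : ν.withDensity f = ν₁ := Measure.withDensity_rnDeriv_eq ν₁ ν hac
  have hfint : ∫⁻ x, f x ∂ν = 1 := by
    have : ν.withDensity f Set.univ = ν₁ Set.univ := by rw [hwd]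
    rwa [withDensity_apply _ MeasurableSet.univ, Measure.restrict_univ, measure_univ] at this
  -- the density is invariant a.e. under each T g
  have hfinv : ∀ g : G, ∀ᵐ x ∂ν, f (T g x) = f x := by
    intro g
    set ρg : X → ℝ≥0∞ := fun x => ENNReal.ofReal (ρ g x) with hρg
    have hρgmeas : Measurable ρg :=
      (hρmeas.comp (measurable_const.prodMk measurable_id)).ennreal_ofReal
    have map1 : ν₁.map (T g⁻¹) = ν₁.withDensity ρg := by
      apply Measure.ext
      intro s hs
      rw [Measure.map_apply (hTg g⁻¹) hs, ← himg g s, hRN1 g s hs, withDensity_apply _ hs]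
    have map0 : ν.map (T g⁻¹) = ν.withDensity ρg := by
      apply Measure.ext
      intro s hs
      rw [Measure.map_apply (hTg g⁻¹) hs, ← himg g s, hRN g s hs, withDensity_apply _ hs]
    set fg : X → ℝ≥0∞ := fun x => f (T g x) with hfg
    have hfgmeas : Measurable fg := hfmeas.comp (hTg g)
    have step : (ν.withDensity f).map (T g⁻¹)
        = (ν.map (T g⁻¹)).withDensity fg := by
      apply Measure.ext
      intro s hs
      rw [Measure.map_apply (hTg g⁻¹) hs, withDensity_apply _ hs,
        withDensity_apply _ ((hTg g⁻¹) hs)]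
      rw [setLIntegral_map (f := fg) hs hfgmeas (hTg g⁻¹)]
      refine setLIntegral_congr_fun ((hTg g⁻¹) hs) ?_
      intro x _
      simp only [hfg]
      rw [hTinv' g x]
    have chain : ν.withDensity (f * ρg) = ν.withDensity (ρg * fg) := by
      calc ν.withDensity (f * ρg)
          = (ν.withDensity f).withDensity ρg := withDensity_mul ν hfmeas hρgmeas
        _ = ν₁.withDensity ρg := by rw [hwd]
        _ = ν₁.map (T g⁻¹) := map1.symm
        _ = (ν.withDensity f).map (T g⁻¹) := by rw [hwd]
        _ = (ν.map (T g⁻¹)).withDensity fg := step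
        _ = (ν.withDensity ρg).withDensity fg := by rw [map0]
        _ = ν.withDensity (ρg * fg) := (withDensity_mul ν hρgmeas hfgmeas).symm
    have hfin : ∫⁻ x, (f * ρg) x ∂ν ≠ ⊤ := by
      haveI : IsProbabilityMeasure (ν₁.map (T g⁻¹)) :=
        Measure.isProbabilityMeasure_map (hTg g⁻¹).aemeasurable
      have huniv : ν.withDensity (f * ρg) Set.univ = ν₁.map (T g⁻¹) Set.univ := by
        rw [chain, withDensity_mul ν hρgmeas hfgmeas, ← map0, ← step, hwd]
      rw [withDensity_apply _ MeasurableSet.univ, Measure.restrict_univ] at huniv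
      rw [huniv, measure_univ]
      exact ENNReal.one_ne_top
    have haeq : (f * ρg) =ᵐ[ν] (ρg * fg) :=
      (withDensity_eq_iff (hfmeas.mul hρgmeas).aemeasurable
        (hρgmeas.mul hfgmeas).aemeasurable hfin).mp chain
    refine haeq.mono fun x hx => ?_
    simp only [Pi.mul_apply] at hx
    have hne0 : ρg x ≠ 0 := by
      simp [hρg, ENNReal.ofReal_eq_zero, not_le, hρpos g x]
    have hnetop : ρg x ≠ ⊤ := ENNReal.ofReal_ne_top
    have h2 := congrArg (fun t => (ρg x)⁻¹ * t) hx
    rw [mul_comm (f x) (ρg x), ← mul_assoc, ← mul_assoc,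
      ENNReal.inv_mul_cancel hne0 hnetop, one_mul, one_mul] at h2
    exact h2.symm
  -- the set where the density exceeds 1 is almost invariant
  set A : Set X := {x | 1 < f x} with hA
  have hAmeas : MeasurableSet A := measurableSet_lt measurable_const hfmeas
  have haeA : ∀ g : G, ∀ᵐ x ∂ν, (T g x ∈ A ↔ x ∈ A) := by
    intro g
    refine (hfinv g).mono fun x hx => ?_
    simp only [hA, Set.mem_setOf_eq, hx]
  haveI : MeasurableInv G := inferInstance
  obtain ⟨B, hBmeas, hBinv, hBA⟩ := aux_transfer14 K hKmono hKunion μ hμprob hμinv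
    (fun g => measurable_const_mul g) T hTmeas hTmul ν inferInstance A hAmeas haeA
  have hBimg : ∀ g : G, T g '' B = B := by
    intro g
    rw [himg g B, hBinv g⁻¹]
  -- ergodicity: ν A ∈ {0, 1}
  have hν1 : ν₁ = ν := by
    have hfone : f =ᵐ[ν] fun _ => (1 : ℝ≥0∞) := by
      rcases herg B hBmeas hBimg with h0 | h1
      · -- f ≤ 1 a.e.
        have hA0 : ν A = 0 := by rw [← hBA]; exact h0
        have hle : f ≤ᵐ[ν] fun _ => (1 : ℝ≥0∞) := by
          rw [Filter.EventuallyLE, ae_iff]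
          have : {x | ¬ f x ≤ 1} = A := by
            ext x; simp [hA, not_le]
          rw [this]; exact hA0
        have : f =ᵐ[ν] fun _ => (1 : ℝ≥0∞) := by
          refine ae_eq_of_ae_le_of_lintegral_le hle (by rw [hfint]; exact ENNReal.one_ne_top) 
            aemeasurable_const ?_
          rw [hfint]
          simp
        exact this
      · -- f > 1 a.e., contradiction
        exfalso
        have hA1 : ν A = 1 := by rw [← hBA]; exact h1
        have hAc : ν Aᶜ = 0 := by
          rw [measure_compl hAmeas (measure_ne_top _ _), hA1, measure_univ, tsub_self]
        have hgt : ∀ᵐ x ∂ν, 1 < f x := by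
          rw [ae_iff]
          have : {x | ¬ 1 < f x} = Aᶜ := by
            ext x; simp [hA]
          rw [this]; exact hAc
        have hge : (fun _ => (1 : ℝ≥0∞)) ≤ᵐ[ν] f := hgt.mono fun x hx => hx.le
        have heq : (fun _ => (1 : ℝ≥0∞)) =ᵐ[ν] f := by
          refine ae_eq_of_ae_le_of_lintegral_le hge (by simp) hfmeas.aemeasurable ?_
          rw [hfint]
          simp
        have hbad : ∀ᵐ x ∂ν, False := by
          filter_upwards [hgt, heq] with x h1x h2x
          rw [← h2x] at h1x
          exact lt_irrefl _ h1x
        have hzero : ν Set.univ = 0 :=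
          measure_eq_zero_iff_ae_notMem.mpr (hbad.mono fun _ hx _ => hx)
        rw [measure_univ] at hzero
        exact one_ne_zero hzero
    rw [← hwd, withDensity_congr_ae hfone]
    exact withDensity_one
  refine ⟨hν1, ?_⟩
  -- cancel to get ν₂ = ν
  have hsum : ENNReal.ofReal α + ENNReal.ofReal (1 - α) = 1 := by
    rw [← ENNReal.ofReal_add hα0.le (by linarith)]
    norm_num
  have h1αne : ENNReal.ofReal (1 - α) ≠ 0 := by
    simp only [ne_eq, ENNReal.ofReal_eq_zero, not_le]
    linarith
  apply Measure.ext
  intro s hs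
  have hν : ν s = ENNReal.ofReal α * ν s + ENNReal.ofReal (1 - α) * ν₂ s := by
    conv_lhs => rw [hdec]
    simp [Measure.add_apply, Measure.smul_apply, smul_eq_mul, hν1]
  have hν' : ν s = ENNReal.ofReal α * ν s + ENNReal.ofReal (1 - α) * ν s := by
    rw [← add_mul, hsum, one_mul]
  have hcancel : ENNReal.ofReal α * ν s + ENNReal.ofReal (1 - α) * ν₂ s
      = ENNReal.ofReal α * ν s + ENNReal.ofReal (1 - α) * ν s := by
    rw [← hν, ← hν']
  have hfin : ENNReal.ofReal α * ν s ≠ ⊤ :=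
    ENNReal.mul_ne_top ENNReal.ofReal_ne_top (measure_ne_top _ _)
  have h2 : ENNReal.ofReal (1 - α) * ν₂ s = ENNReal.ofReal (1 - α) * ν s :=
    (ENNReal.add_right_inj hfin).mp hcancel
  have := congrArg (fun t => (ENNReal.ofReal (1 - α))⁻¹ * t) h2
  simpa [← mul_assoc, ENNReal.inv_mul_cancel h1αne ENNReal.ofReal_ne_top, one_mul] using this
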